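/- arXiv:2301.01973 — 3 statements merged into one kernel-verified Lean document; each statement's English description precedes it below -/
import Mathlib

section
/- (Brezzi) Let X be a reflexive Banach space and Q a Banach space. Suppose D ∈ B(X, X*) is weakly coercive over the kernel of E, and E ∈ B(X, Q) is inf-sup stable. Then for every ḡ ∈ X* and f ∈ Q the saddle-point system D x + E* p = ḡ, E x = f has a unique solution (x,p) ∈ X × Q*, and there exists C > 0 independent of the data with ‖x‖_X + ‖p‖_{Q*} ≤ C(‖ḡ‖_{X*} + ‖f‖_Q). -/
open NormedSpace

/-- Separating functional: if `W` is a closed subspace and `x ∉ W`, there is a continuous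
functional vanishing on `W` and nonzero at `x`. -/
lemma aux_sep {X : Type*} [NormedAddCommGroup X] [NormedSpace ℝ X]
    (W : Submodule ℝ X) (hW : IsClosed (W : Set X)) {x : X} (hx : x ∉ W) :
    ∃ φ : X →L[ℝ] ℝ, (∀ w ∈ W, φ w = 0) ∧ φ x ≠ 0 := by
  obtain ⟨φ, u, hb, hxu⟩ := geometric_hahn_banach_closed_point (W.convex) hW hx
  have hu : 0 < u := by simpa using hb 0 W.zero_mem
  refine ⟨φ, ?_, ?_⟩
  · intro w hw
    by_contra h
    have : φ (((u + 1) / φ w) • w) < u := hb _ (W.smul_mem _ hw)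
    rw [map_smul] at this
    rw [smul_eq_mul, div_mul_cancel₀ _ h] at this
    linarith
  · linarith

/-- Approximate controlled preimage from inf-sup stability. -/
lemma aux_approx {X Q : Type*}
    [NormedAddCommGroup X] [NormedSpace ℝ X]
    [NormedAddCommGroup Q] [NormedSpace ℝ Q]
    (E : X →L[ℝ] Q) (β : ℝ) (hβ : 0 < β)
    (hE : ∀ q : Q →L[ℝ] ℝ, β * ‖q‖ ≤ ‖q.comp E‖)
    (q : Q) (hq : q ≠ 0) :
    ∃ x : X, ‖x‖ ≤ 2 / β * ‖q‖ ∧ ‖q - E x‖ ≤ ‖q‖ / 2 := by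
  set r : ℝ := 2 / β * ‖q‖ with hr
  have hqpos : 0 < ‖q‖ := norm_pos_iff.mpr hq
  have hrpos : 0 < r := by positivity
  have hmem : q ∈ closure (E '' Metric.closedBall 0 r) := by
    by_contra hqm
    have hconv : Convex ℝ (closure (E '' Metric.closedBall 0 r)) :=
      ((convex_closedBall (0:X) r).linear_image (E : X →ₗ[ℝ] Q)).closure
    obtain ⟨φ, u, hb, hxu⟩ :=
      geometric_hahn_banach_closed_point hconv isClosed_closure hqm
    have h0 : (0:Q) ∈ closure (E '' Metric.closedBall 0 r) :=
      subset_closure ⟨0, by simp [hrpos.le], by simp⟩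
    have hu : 0 < u := by simpa using hb 0 h0
    have hφ : φ ≠ 0 := by
      intro h; rw [h] at hxu; simp at hxu; linarith
    -- ‖φ ∘ E‖ ≤ u / r
    have hball : ∀ v : X, ‖v‖ ≤ r → |φ (E v)| ≤ u := by
      intro v hv
      have h1 : φ (E v) < u := hb _ (subset_closure ⟨v, by simpa using hv, rfl⟩)
      have h2 : φ (E (-v)) < u := hb _ (subset_closure ⟨-v, by simpa using hv, rfl⟩)
      rw [map_neg, map_neg] at h2
      rw [abs_le]; constructor <;> linarith
    have hcomp : ‖φ.comp E‖ ≤ u / r := by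
      refine ContinuousLinearMap.opNorm_le_bound _ (by positivity) ?_
      intro v
      rcases eq_or_ne v 0 with rfl | hv
      · simp
      · have hvpos : 0 < ‖v‖ := norm_pos_iff.mpr hv
        have := hball ((r / ‖v‖) • v) (by
          rw [norm_smul, norm_div, Real.norm_eq_abs, abs_of_pos hrpos, Real.norm_eq_abs,
            abs_of_pos hvpos, div_mul_cancel₀ _ hvpos.ne'])
        rw [map_smul, map_smul, smul_eq_mul, abs_mul, abs_div, abs_of_pos hrpos,
          abs_of_pos hvpos] at this
        have h3 : |φ (E v)| ≤ u / r * ‖v‖ := by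
          rw [div_mul_eq_mul_div, le_div_iff₀ hrpos]
          rw [div_mul_eq_mul_div, div_le_iff₀ hvpos] at this
          nlinarith
        calc ‖(φ.comp E) v‖ = |φ (E v)| := rfl
        _ ≤ u / r * ‖v‖ := h3
    have hφpos : 0 < ‖φ‖ := norm_pos_iff.mpr hφ
    have h4 : β * ‖φ‖ ≤ u / r := le_trans (hE φ) hcomp
    have h5 : u < ‖φ‖ * ‖q‖ :=
      lt_of_lt_of_le hxu ((le_abs_self _).trans (φ.le_opNorm q))
    have h6 : β * ‖φ‖ * r < ‖φ‖ * ‖q‖ := by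
      calc β * ‖φ‖ * r ≤ u / r * r := by nlinarith
      _ = u := div_mul_cancel₀ _ hrpos.ne'
      _ < ‖φ‖ * ‖q‖ := h5
    rw [hr] at h6
    have : β * (2 / β) = 2 := by field_simp
    nlinarith
  rw [Metric.mem_closure_iff] at hmem
  obtain ⟨y, ⟨x, hx, rfl⟩, hd⟩ := hmem (‖q‖ / 2) (by positivity)
  exact ⟨x, by simpa using hx, by rw [← dist_eq_norm]; exact hd.le⟩

/-- Quantitative surjectivity of an inf-sup stable operator. -/
lemma aux_surj {X Q : Type*}
    [NormedAddCommGroup X] [NormedSpace ℝ X] [CompleteSpace X]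
    [NormedAddCommGroup Q] [NormedSpace ℝ Q]
    (E : X →L[ℝ] Q) (β : ℝ) (hβ : 0 < β)
    (hE : ∀ q : Q →L[ℝ] ℝ, β * ‖q‖ ≤ ‖q.comp E‖) (q : Q) :
    ∃ x : X, E x = q ∧ ‖x‖ ≤ 4 / β * ‖q‖ := by
  have hF : ∀ q : Q, ∃ x : X, ‖x‖ ≤ 2 / β * ‖q‖ ∧ ‖q - E x‖ ≤ ‖q‖ / 2 := by
    intro q
    rcases eq_or_ne q 0 with rfl | hq
    · exact ⟨0, by simp⟩
    · exact aux_approx E β hβ hE q hq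
  choose F hF1 hF2 using hF
  set g : ℕ → Q := fun n => Nat.rec q (fun _ gn => gn - E (F gn)) n with hgdef
  have hgs : ∀ n, g (n + 1) = g n - E (F (g n)) := fun n => rfl
  have hg00 : g 0 = q := rfl
  have hgn : ∀ n, ‖g n‖ ≤ (1/2 : ℝ) ^ n * ‖q‖ := by
    intro n; induction n with
    | zero => simp [hg00]
    | succ n ih =>
      calc ‖g (n+1)‖ = ‖g n - E (F (g n))‖ := by rw [hgs]
      _ ≤ ‖g n‖ / 2 := hF2 _
      _ ≤ (1/2 : ℝ) ^ n * ‖q‖ / 2 := by linarith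
      _ = (1/2 : ℝ) ^ (n+1) * ‖q‖ := by ring
  have hxn : ∀ n, ‖F (g n)‖ ≤ 2 / β * ‖q‖ * (1/2 : ℝ) ^ n := by
    intro n
    calc ‖F (g n)‖ ≤ 2 / β * ‖g n‖ := hF1 _
    _ ≤ 2 / β * ((1/2 : ℝ) ^ n * ‖q‖) := by
        have h2β : (0:ℝ) ≤ 2 / β := by positivity
        exact mul_le_mul_of_nonneg_left (hgn n) h2β
    _ = 2 / β * ‖q‖ * (1/2 : ℝ) ^ n := by ring
  have hbsum : Summable (fun n : ℕ => 2 / β * ‖q‖ * (1/2 : ℝ) ^ n) :=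
    summable_geometric_two.mul_left _
  have hnorms : Summable fun n => ‖F (g n)‖ :=
    Summable.of_nonneg_of_le (fun n => norm_nonneg _) hxn hbsum
  have hsum : Summable fun n => F (g n) := hnorms.of_norm
  refine ⟨∑' n, F (g n), ?_, ?_⟩
  · have hEsum : Summable fun n => E (F (g n)) := hsum.map E E.continuous
    rw [E.map_tsum hsum]
    have hP : ∀ n, ∑ i ∈ Finset.range n, E (F (g i)) = q - g n := by
      intro n; induction n with
      | zero => simp [hg00]
      | succ n ih => rw [Finset.sum_range_succ, ih, hgs]; abel
    have hg0 : Filter.Tendsto g Filter.atTop (nhds 0) := by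
      refine squeeze_zero_norm hgn ?_
      have := (tendsto_pow_atTop_nhds_zero_of_lt_one (by norm_num : (0:ℝ) ≤ 1/2)
        (by norm_num : (1/2 : ℝ) < 1)).mul_const ‖q‖
      simpa using this
    have hT : Filter.Tendsto (fun n => ∑ i ∈ Finset.range n, E (F (g i)))
        Filter.atTop (nhds q) := by
      simp only [hP]
      simpa using Filter.Tendsto.sub (tendsto_const_nhds (x := q)) hg0
    exact ((hEsum.hasSum_iff_tendsto_nat).mpr hT).tsum_eq
  · calc ‖∑' n, F (g n)‖ ≤ ∑' n, ‖F (g n)‖ := norm_tsum_le_tsum_norm hnorms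
    _ ≤ ∑' n : ℕ, 2 / β * ‖q‖ * (1/2 : ℝ) ^ n := hnorms.tsum_le_tsum hxn hbsum
    _ = 2 / β * ‖q‖ * 2 := by rw [tsum_mul_left, tsum_geometric_two]
    _ = 4 / β * ‖q‖ := by ring

/-- A closed subspace of a reflexive space is reflexive. -/
lemma aux_subrefl {X : Type*} [NormedAddCommGroup X] [NormedSpace ℝ X]
    (hrefl : Function.Surjective (inclusionInDoubleDual ℝ X))
    (V : Submodule ℝ X) (hVc : IsClosed (V : Set X)) :
    Function.Surjective (inclusionInDoubleDual ℝ V) := by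
  intro Φ
  -- restriction map from Dual X to Dual V
  set r : (X →L[ℝ] ℝ) →L[ℝ] (V →L[ℝ] ℝ) :=
    (ContinuousLinearMap.compL ℝ V X ℝ).flip V.subtypeL with hrdef
  have hr : ∀ (ψ : X →L[ℝ] ℝ) (v : V), r ψ v = ψ v := fun ψ v => rfl
  obtain ⟨x, hx⟩ := hrefl (Φ.comp r)
  have hxval : ∀ ψ : X →L[ℝ] ℝ, ψ x = Φ (r ψ) := by
    intro ψ
    have := congrFun (congrArg DFunLike.coe hx) ψ
    simpa using this
  have hxV : x ∈ V := by
    by_contra hxV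
    obtain ⟨ψ, hψ0, hψx⟩ := aux_sep V hVc hxV
    have : r ψ = 0 := by
      ext v; exact hψ0 v v.2
    have h0 : ψ x = 0 := by rw [hxval, this, map_zero]
    exact hψx h0
  refine ⟨⟨x, hxV⟩, ?_⟩
  ext φ
  obtain ⟨ψ, hψ, -⟩ := exists_extension_norm_eq V φ
  have hrψ : r ψ = φ := by ext v; rw [hr, hψ]
  calc inclusionInDoubleDual ℝ V ⟨x, hxV⟩ φ = φ ⟨x, hxV⟩ := rfl
  _ = ψ x := (hψ ⟨x, hxV⟩).symm
  _ = Φ (r ψ) := hxval ψ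
  _ = Φ φ := by rw [hrψ]

/-- Banach–Nečas–Babuška surjectivity on a reflexive Banach space. -/
lemma aux_bnb {V : Type*} [NormedAddCommGroup V] [NormedSpace ℝ V] [CompleteSpace V]
    (hrefl : Function.Surjective (inclusionInDoubleDual ℝ V))
    (T : V →L[ℝ] (V →L[ℝ] ℝ)) (γ : ℝ) (hγ : 0 < γ)
    (h1 : ∀ v : V, γ * ‖v‖ ≤ ‖T v‖)
    (h2 : ∀ w : V, (∀ v : V, T v w = 0) → w = 0) :
    Function.Surjective T := by
  have halip : AntilipschitzWith (γ⁻¹).toNNReal T := by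
    refine T.antilipschitz_of_bound fun v => ?_
    rw [Real.coe_toNNReal _ (by positivity), ← div_eq_inv_mul, le_div_iff₀ hγ]
    nlinarith [h1 v]
  have hclosed : IsClosed (Set.range T) :=
    (halip.isClosedEmbedding T.uniformContinuous).isClosed_range
  have hdense : ∀ ℓ : V →L[ℝ] ℝ, ℓ ∈ closure (Set.range T) := by
    intro ℓ
    by_contra hℓ
    have hmem : ℓ ∉ (LinearMap.range (T : V →ₗ[ℝ] (V →L[ℝ] ℝ))).topologicalClosure := by
      intro h
      have h' : ℓ ∈ closure (↑(LinearMap.range (T : V →ₗ[ℝ] (V →L[ℝ] ℝ))) : Set (V →L[ℝ] ℝ)) := by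
        rw [← Submodule.topologicalClosure_coe]; exact h
      exact hℓ h'
    obtain ⟨Φ, hΦ0, hΦℓ⟩ := aux_sep _ (LinearMap.range (T : V →ₗ[ℝ] (V →L[ℝ] ℝ))).isClosed_topologicalClosure hmem
    obtain ⟨w, hw⟩ := hrefl Φ
    have hweq : ∀ φ : V →L[ℝ] ℝ, Φ φ = φ w := by
      intro φ
      have := congrFun (congrArg DFunLike.coe hw) φ
      exact (by simpa using this : φ w = Φ φ).symm
    have hw0 : w = 0 := by
      refine h2 w fun v => ?_
      have : Φ (T v) = 0 :=
        hΦ0 _ (Submodule.le_topologicalClosure _ (LinearMap.mem_range_self _ v))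
      rwa [hweq] at this
    refine hΦℓ ?_
    rw [hweq, hw0, map_zero]
  intro ℓ
  have := hdense ℓ
  rwa [hclosed.closure_eq] at this

/-- Factor a functional vanishing on `ker E` through `E`. -/
lemma aux_factor {X Q : Type*} [NormedAddCommGroup X] [NormedSpace ℝ X]
    [NormedAddCommGroup Q] [NormedSpace ℝ Q]
    (E : X →L[ℝ] Q) (s : Q → X) (hs1 : ∀ q, E (s q) = q)
    (c : ℝ) (hs2 : ∀ q, ‖s q‖ ≤ c * ‖q‖)
    (h : X →L[ℝ] ℝ) (hker : ∀ w : X, E w = 0 → h w = 0) :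
    ∃ p : Q →L[ℝ] ℝ, ∀ w : X, p (E w) = h w := by
  have hinv : ∀ (w : X) (q : Q), E w = q → h (s q) = h w := by
    intro w q hw
    have h0 := hker (s q - w) (by rw [map_sub, hs1, hw, sub_self])
    rw [map_sub] at h0; linarith
  refine ⟨LinearMap.mkContinuous
    { toFun := fun q => h (s q)
      map_add' := fun q₁ q₂ => by
        show h (s (q₁ + q₂)) = h (s q₁) + h (s q₂)
        rw [hinv (s q₁ + s q₂) (q₁ + q₂) (by rw [map_add, hs1, hs1]), map_add]
      map_smul' := fun cc q => by
        show h (s (cc • q)) = (RingHom.id ℝ) cc • h (s q)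
        rw [hinv (cc • s q) (cc • q) (by rw [map_smul, hs1]), map_smul]; rfl }
    (‖h‖ * c) (fun q => ?_), fun w => hinv w (E w) rfl⟩
  calc ‖h (s q)‖ ≤ ‖h‖ * ‖s q‖ := h.le_opNorm _
  _ ≤ ‖h‖ * (c * ‖q‖) := mul_le_mul_of_nonneg_left (hs2 q) (norm_nonneg h)
  _ = ‖h‖ * c * ‖q‖ := by ring

set_option maxHeartbeats 1000000 in
/-- Brezzi's theorem: if `X` is a reflexive Banach space, `D ∈ B(X,X*)` is weakly coercive over
the kernel of `E` (both inf-sup conditions hold on `ker E`), and `E ∈ B(X,Q)` is inf-sup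
stable, then for every `ḡ ∈ X*` and `f ∈ Q` the saddle-point system `D x + E* p = ḡ`,
`E x = f` has a unique solution `(x,p) ∈ X × Q*` satisfying
`‖x‖ + ‖p‖ ≤ C (‖ḡ‖ + ‖f‖)` with `C` independent of the data. -/
theorem stmt_2 {X Q : Type*}
    [NormedAddCommGroup X] [NormedSpace ℝ X] [CompleteSpace X]
    [NormedAddCommGroup Q] [NormedSpace ℝ Q] [CompleteSpace Q]
    -- reflexivity of X
    (hrefl : Function.Surjective (NormedSpace.inclusionInDoubleDual ℝ X))
    (D : X →L[ℝ] X →L[ℝ] ℝ) (E : X →L[ℝ] Q)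
    -- E is inf-sup stable:  β‖q‖ ≤ sup_{v ≠ 0} ⟨q, E v⟩/‖v‖ = ‖q ∘ E‖
    (β : ℝ) (hβ : 0 < β)
    (hE : ∀ q : Q →L[ℝ] ℝ, β * ‖q‖ ≤ ‖q.comp E‖)
    -- D is weakly coercive over ker E: both inf-sup conditions for D restricted to ker E
    (γ : ℝ) (hγ : 0 < γ)
    (hD1 : ∀ v : X, E v = 0 →
      γ * ‖v‖ ≤ ⨆ w : {w : X // E w = 0 ∧ ‖w‖ ≤ 1}, D v w.1)
    (hD2 : ∀ w : X, E w = 0 →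
      γ * ‖w‖ ≤ ⨆ v : {v : X // E v = 0 ∧ ‖v‖ ≤ 1}, D v.1 w) :
    ∃ C > 0, ∀ (g : X →L[ℝ] ℝ) (f : Q),
      (∃! xp : X × (Q →L[ℝ] ℝ),
        (∀ w : X, D xp.1 w + xp.2 (E w) = g w) ∧ E xp.1 = f) ∧
      (∀ (x : X) (p : Q →L[ℝ] ℝ),
        ((∀ w : X, D x w + p (E w) = g w) ∧ E x = f) →
          ‖x‖ + ‖p‖ ≤ C * (‖g‖ + ‖f‖)) := by
  classical
  haveI hne1 : Nonempty {w : X // E w = 0 ∧ ‖w‖ ≤ 1} := ⟨⟨0, by simp⟩⟩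
  choose s hs1 hs2 using aux_surj E β hβ hE
  -- solvability of the reduced problem on the kernel of E
  have key : ∀ (g : X →L[ℝ] ℝ) (f : Q), ∃ x : X,
      E x = f ∧ ∀ w : X, E w = 0 → D x w = g w := by
    set V : Submodule ℝ X := LinearMap.ker (E : X →ₗ[ℝ] Q) with hV
    have hVc : IsClosed (V : Set X) := ContinuousLinearMap.isClosed_ker E
    haveI : CompleteSpace V := hVc.completeSpace_coe
    have hreflV := aux_subrefl hrefl V hVc
    set r : (X →L[ℝ] ℝ) →L[ℝ] (V →L[ℝ] ℝ) :=
      (ContinuousLinearMap.compL ℝ V X ℝ).flip V.subtypeL with hrdef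
    set T : V →L[ℝ] (V →L[ℝ] ℝ) := r.comp (D.comp V.subtypeL) with hTdef
    have hT : ∀ (v w : V), T v w = D v.1 w.1 := fun v w => rfl
    have hmem : ∀ v : V, E v.1 = 0 := fun v => v.2
    have h1 : ∀ v : V, γ * ‖v‖ ≤ ‖T v‖ := by
      intro v
      refine le_trans (hD1 v.1 (hmem v)) (ciSup_le fun w => ?_)
      calc D v.1 w.1 = T v ⟨w.1, w.2.1⟩ := rfl
      _ ≤ ‖T v ⟨w.1, w.2.1⟩‖ := le_abs_self _
      _ ≤ ‖T v‖ * ‖(⟨w.1, w.2.1⟩ : V)‖ := (T v).le_opNorm _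
      _ ≤ ‖T v‖ * 1 := by
          have he : ‖(⟨w.1, w.2.1⟩ : V)‖ = ‖w.1‖ := rfl
          rw [he]
          exact mul_le_mul_of_nonneg_left w.2.2 (norm_nonneg (T v))
      _ = ‖T v‖ := mul_one _
    have h2 : ∀ w : V, (∀ v : V, T v w = 0) → w = 0 := by
      intro w hw
      have hle : γ * ‖w.1‖ ≤ 0 :=
        le_trans (hD2 w.1 (hmem w)) (ciSup_le fun v => le_of_eq (hw ⟨v.1, v.2.1⟩))
      have : ‖w.1‖ ≤ 0 := by nlinarith
      exact Subtype.ext (norm_le_zero_iff.mp this)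
    have hTsurj : Function.Surjective T := aux_bnb hreflV T γ hγ h1 h2
    intro g f
    obtain ⟨z, hz⟩ := hTsurj (r (g - D (s f)))
    refine ⟨s f + z.1, ?_, ?_⟩
    · rw [map_add, hmem z, add_zero, hs1]
    · intro w hw
      have h3 : T z ⟨w, hw⟩ = r (g - D (s f)) ⟨w, hw⟩ := by rw [hz]
      have h4 : D z.1 w = (g - D (s f)) w := h3
      rw [ContinuousLinearMap.sub_apply] at h4
      have h5 : D (s f + z.1) w = D (s f) w + D z.1 w := by
        rw [map_add, ContinuousLinearMap.add_apply]
      rw [h5, h4]; ring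
  have hd0 : (0:ℝ) ≤ ‖D‖ := by positivity
  set d : ℝ := ‖D‖ with hddef
  set A : ℝ := 4 / β with hA
  have hA0 : 0 < A := by positivity
  set C₁ : ℝ := A + 1/γ + (1/γ) * d * A with hC₁
  have hC₁0 : 0 < C₁ := by positivity
  set C₂ : ℝ := (1/β) * (1 + d * C₁) with hC₂
  have hC₂0 : 0 < C₂ := by positivity
  refine ⟨C₁ + C₂, by positivity, ?_⟩
  intro g f
  obtain ⟨x, hEx, hxg⟩ := key g f
  have hker : ∀ w : X, E w = 0 → (g - D x) w = 0 := by
    intro w hw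
    rw [ContinuousLinearMap.sub_apply, hxg w hw, sub_self]
  obtain ⟨p, hpE⟩ := aux_factor E s hs1 A hs2 (g - D x) hker
  have hpE' : ∀ w : X, p (E w) = g w - D x w := by
    intro w; rw [hpE w, ContinuousLinearMap.sub_apply]
  have hsolx : ∀ w : X, D x w + p (E w) = g w := by
    intro w; rw [hpE']; ring
  -- a priori bound for any solution
  have hbound : ∀ (x' : X) (p' : Q →L[ℝ] ℝ),
      ((∀ w : X, D x' w + p' (E w) = g w) ∧ E x' = f) →
        ‖x'‖ + ‖p'‖ ≤ (C₁ + C₂) * (‖g‖ + ‖f‖) := by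
    rintro x' p' ⟨hsol, hEx'⟩
    have hg0 : (0:ℝ) ≤ ‖g‖ := by positivity
    have hf0 : (0:ℝ) ≤ ‖f‖ := norm_nonneg f
    have hxfb : ‖s f‖ ≤ A * ‖f‖ := hs2 f
    have hxf0 : (0:ℝ) ≤ ‖s f‖ := norm_nonneg _
    have hv : E (x' - s f) = 0 := by rw [map_sub, hEx', hs1, sub_self]
    have hb1 : γ * ‖x' - s f‖ ≤ ‖g‖ + d * ‖s f‖ := by
      refine le_trans (hD1 _ hv) (ciSup_le fun w => ?_)
      have hw0 : E w.1 = 0 := w.2.1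
      have hw1 : ‖w.1‖ ≤ 1 := w.2.2
      have hwn : (0:ℝ) ≤ ‖w.1‖ := norm_nonneg _
      have hps : p' (E w.1) = 0 := by rw [hw0, map_zero]
      have hdx' : D x' w.1 = g w.1 := by have := hsol w.1; rw [hps] at this; linarith
      have h6 : D (x' - s f) w.1 = g w.1 - D (s f) w.1 := by
        rw [map_sub, ContinuousLinearMap.sub_apply, hdx']
      rw [h6]
      have hb2 : |g w.1| ≤ ‖g‖ * ‖w.1‖ := g.le_opNorm _
      have hb3 : |D (s f) w.1| ≤ d * ‖s f‖ * ‖w.1‖ := D.le_opNorm₂ (s f) w.1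
      have h7 := abs_sub (g w.1) (D (s f) w.1)
      have h8 := le_abs_self (g w.1 - D (s f) w.1)
      have e1 : ‖g‖ * ‖w.1‖ ≤ ‖g‖ * 1 := mul_le_mul_of_nonneg_left hw1 hg0
      have e2 : d * ‖s f‖ * ‖w.1‖ ≤ d * ‖s f‖ * 1 :=
        mul_le_mul_of_nonneg_left hw1 (mul_nonneg hd0 hxf0)
      linarith
    have hx'b : ‖x'‖ ≤ C₁ * (‖g‖ + ‖f‖) := by
      have h8 : ‖x'‖ - ‖s f‖ ≤ ‖x' - s f‖ := norm_sub_norm_le x' (s f)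
      have h9 : ‖x' - s f‖ ≤ (1/γ) * (‖g‖ + d * ‖s f‖) := by
        rw [← le_div_iff₀' hγ] at hb1
        calc ‖x' - s f‖ ≤ (‖g‖ + d * ‖s f‖) / γ := hb1
        _ = (1/γ) * (‖g‖ + d * ‖s f‖) := by ring
      have hγ' : (0:ℝ) < 1/γ := by positivity
      rw [hC₁]
      have p1 : 1/γ * d * ‖s f‖ ≤ 1/γ * d * (A * ‖f‖) :=
        mul_le_mul_of_nonneg_left hxfb (mul_nonneg (le_of_lt hγ') hd0)
      have p2 : (0:ℝ) ≤ A * ‖g‖ := mul_nonneg (le_of_lt hA0) hg0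
      have p3 : (0:ℝ) ≤ 1/γ * ‖f‖ := mul_nonneg (le_of_lt hγ') hf0
      have p4 : (0:ℝ) ≤ 1/γ * d * A * ‖g‖ := by positivity
      nlinarith [h8, h9, hxfb, p1, p2, p3, p4]
    have hpcomp : ‖p'.comp E‖ ≤ ‖g‖ + d * ‖x'‖ := by
      have hx'0 : (0:ℝ) ≤ ‖x'‖ := norm_nonneg _
      refine ContinuousLinearMap.opNorm_le_bound _ (by positivity) fun w => ?_
      have hpw : p' (E w) = g w - D x' w := by have := hsol w; linarith
      have hb2 : |g w| ≤ ‖g‖ * ‖w‖ := g.le_opNorm _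
      have hb3 : |D x' w| ≤ d * ‖x'‖ * ‖w‖ := D.le_opNorm₂ x' w
      calc ‖p'.comp E w‖ = |g w - D x' w| := by rw [ContinuousLinearMap.comp_apply, hpw]; rfl
      _ ≤ |g w| + |D x' w| := abs_sub _ _
      _ ≤ (‖g‖ + d * ‖x'‖) * ‖w‖ := by nlinarith
    have hp'b : ‖p'‖ ≤ C₂ * (‖g‖ + ‖f‖) := by
      have h10 : β * ‖p'‖ ≤ ‖g‖ + d * ‖x'‖ := le_trans (hE p') hpcomp
      rw [hC₂]
      have h11 : β * ‖p'‖ ≤ (1 + d * C₁) * (‖g‖ + ‖f‖) := by nlinarith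
      have hp'0 : (0:ℝ) ≤ ‖p'‖ := norm_nonneg _
      have hβ' : (0:ℝ) < 1/β := by positivity
      calc ‖p'‖ = (1/β) * (β * ‖p'‖) := by field_simp
      _ ≤ (1/β) * ((1 + d * C₁) * (‖g‖ + ‖f‖)) :=
        mul_le_mul_of_nonneg_left h11 (le_of_lt hβ')
      _ = 1/β * (1 + d * C₁) * (‖g‖ + ‖f‖) := by ring
    have hg0' : (0:ℝ) ≤ ‖g‖ + ‖f‖ := by positivity
    linarith
  refine ⟨⟨⟨x, p⟩, ⟨hsolx, hEx⟩, ?_⟩, hbound⟩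
  -- uniqueness
  rintro ⟨y, q⟩ ⟨hy, hEy⟩
  have hEd : E (y - x) = 0 := by rw [map_sub, hEy, hEx, sub_self]
  have hdw : ∀ w : X, D (y - x) w + (q - p) (E w) = 0 := by
    intro w
    have hyw := hy w
    have hxw := hsolx w
    rw [map_sub, ContinuousLinearMap.sub_apply, ContinuousLinearMap.sub_apply]
    linarith
  have hy0 : y - x = 0 := by
    have hker0 : ∀ w : X, E w = 0 → D (y - x) w = 0 := by
      intro w hw
      have := hdw w
      rw [hw, map_zero] at this
      linarith
    have hle : γ * ‖y - x‖ ≤ 0 :=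
      le_trans (hD1 _ hEd) (ciSup_le fun w => le_of_eq (hker0 w.1 w.2.1))
    have : ‖y - x‖ ≤ 0 := by nlinarith
    exact norm_le_zero_iff.mp this
  have hq0 : q - p = 0 := by
    have hcomp : (q - p).comp E = 0 := by
      ext w
      have := hdw w
      rw [hy0, map_zero, ContinuousLinearMap.zero_apply, zero_add] at this
      simpa using this
    have h13 := hE (q - p)
    rw [hcomp, norm_zero] at h13
    have : ‖q - p‖ ≤ 0 := by nlinarith
    exact norm_le_zero_iff.mp this
  exact Prod.ext (sub_eq_zero.mp hy0) (sub_eq_zero.mp hq0)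
end

section
/- Under the assumptions that Y and U are reflexive Hilbert spaces, A(μ) ∈ B(Y, Q) is weakly coercive, B(μ) ∈ B(U, Q) is not the zero operator, αN(μ) is coercive on U with constant α > 0, and m(z,z;μ) ≥ 0 for all z ∈ Z, the operator E(μ) = (A(μ), B(μ)) : Y × U → Q is inf-sup stable and the operator D(μ) = diag(O*M(μ)O, αN(μ)) is coercive over the kernel of E(μ). Consequently, the linear-quadratic optimality system in saddle-point form has a unique solution. -/
open InnerProductSpace

/-- The operator associated with a bilinear form via Riesz representation. -/
noncomputable def stmt3AuxOp {Y P : Type*} [NormedAddCommGroup Y] [NormedSpace ℝ Y]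
    [NormedAddCommGroup P] [InnerProductSpace ℝ P] [CompleteSpace P]
    (f : Y →L[ℝ] P →L[ℝ] ℝ) : Y →L[ℝ] P :=
  LinearMap.mkContinuous
    { toFun := fun y => (toDual ℝ P).symm (f y)
      map_add' := fun y y' => by simp
      map_smul' := fun r y => by simp }
    ‖f‖ (fun y => by
      simp only [LinearMap.coe_mk, AddHom.coe_mk, LinearIsometryEquiv.norm_map]
      exact f.le_opNorm y)

theorem stmt3AuxOp_inner {Y P : Type*} [NormedAddCommGroup Y] [NormedSpace ℝ Y]
    [NormedAddCommGroup P] [InnerProductSpace ℝ P] [CompleteSpace P]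
    (f : Y →L[ℝ] P →L[ℝ] ℝ) (y : Y) (p : P) :
    (inner ℝ (stmt3AuxOp f y) p : ℝ) = f y p := toDual_symm_apply

theorem stmt3AuxOp_norm {Y P : Type*} [NormedAddCommGroup Y] [NormedSpace ℝ Y]
    [NormedAddCommGroup P] [InnerProductSpace ℝ P] [CompleteSpace P]
    (f : Y →L[ℝ] P →L[ℝ] ℝ) (y : Y) : ‖stmt3AuxOp f y‖ = ‖f y‖ :=
  (toDual ℝ P).symm.norm_map (f y)

theorem stmt3Aux_bij {Y P : Type*} [NormedAddCommGroup Y] [InnerProductSpace ℝ Y]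
    [CompleteSpace Y] [NormedAddCommGroup P] [InnerProductSpace ℝ P] [CompleteSpace P]
    (T : Y →L[ℝ] P) (γ : ℝ) (hγ : 0 < γ) (h1 : ∀ y, γ * ‖y‖ ≤ ‖T y‖)
    (h2 : ∀ p : P, (∀ y, (inner ℝ (T y) p : ℝ) = 0) → p = 0) :
    LinearMap.ker (T : Y →ₗ[ℝ] P) = ⊥ ∧ LinearMap.range (T : Y →ₗ[ℝ] P) = ⊤ := by
  have hinj : LinearMap.ker (T : Y →ₗ[ℝ] P) = ⊥ := by
    rw [LinearMap.ker_eq_bot']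
    intro y hy
    have := h1 y
    rw [show T y = 0 from hy, norm_zero] at this
    have : ‖y‖ ≤ 0 := by nlinarith [norm_nonneg y]
    exact norm_eq_zero.mp (le_antisymm this (norm_nonneg y))
  refine ⟨hinj, ?_⟩
  have hanti : AntilipschitzWith (⟨γ⁻¹, by positivity⟩ : NNReal) T := by
    apply T.antilipschitz_of_bound
    intro x
    have h := h1 x
    have : ‖x‖ = γ⁻¹ * (γ * ‖x‖) := by field_simp
    rw [this]
    show γ⁻¹ * (γ * ‖x‖) ≤ γ⁻¹ * ‖T x‖
    exact mul_le_mul_of_nonneg_left h (by positivity)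
  have hclosed : IsClosed (Set.range T) :=
    (hanti.isClosedEmbedding T.uniformContinuous).isClosed_range
  set R := LinearMap.range (T : Y →ₗ[ℝ] P) with hR
  have hclosed' : IsClosed (R : Set P) := by
    have : (R : Set P) = Set.range T := by
      ext x; simp [hR, LinearMap.mem_range, Set.mem_range]
    rw [this]; exact hclosed
  haveI : CompleteSpace R := hclosed'.completeSpace_coe
  have horth : Rᗮ = ⊥ := by
    rw [Submodule.eq_bot_iff]
    intro p hp
    apply h2
    intro y
    exact (Submodule.mem_orthogonal R p).mp hp (T y) ⟨y, rfl⟩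
  calc R = Rᗮᗮ := (Submodule.orthogonal_orthogonal R).symm
    _ = (⊥ : Submodule ℝ P)ᗮ := by rw [horth]
    _ = ⊤ := Submodule.bot_orthogonal_eq_top

set_option maxHeartbeats 2000000 in
/-- For the linear-quadratic OCP: if `Y, U` are reflexive Hilbert spaces, the state form
`a` (associated with `A(μ)`) is weakly coercive, `b` (associated with `B(μ)`) is not zero,
`α n` is coercive with `α > 0`, and `m(z,z) ≥ 0`, then `E(μ) = (A(μ), B(μ))` is inf-sup
stable, `D(μ) = diag(O*M O, αN)` is coercive over `ker E(μ)`, and consequently the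
saddle-point optimality system has a unique solution. (The adjoint space `Q*` is modelled
by the Hilbert space `P`, and the operators by their associated bilinear forms.) -/
theorem stmt_3 {Y U Z P : Type*}
    [NormedAddCommGroup Y] [InnerProductSpace ℝ Y] [CompleteSpace Y]
    [NormedAddCommGroup U] [InnerProductSpace ℝ U] [CompleteSpace U]
    [NormedAddCommGroup Z] [NormedSpace ℝ Z] [CompleteSpace Z]
    [NormedAddCommGroup P] [InnerProductSpace ℝ P] [CompleteSpace P]
    (a : Y →L[ℝ] P →L[ℝ] ℝ) (b : U →L[ℝ] P →L[ℝ] ℝ)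
    (O : Y →L[ℝ] Z) (m : Z →L[ℝ] Z →L[ℝ] ℝ) (n : U →L[ℝ] U →L[ℝ] ℝ)
    (α : ℝ) (hα : 0 < α)
    (hm_symm : ∀ z z' : Z, m z z' = m z' z) (hm_pos : ∀ z : Z, 0 ≤ m z z)
    (hn_symm : ∀ u u' : U, n u u' = n u' u)
    (cn : ℝ) (hcn : 0 < cn) (hn_coer : ∀ u : U, cn * ‖u‖ ^ 2 ≤ n u u)
    -- A(μ) weakly coercive: both inf-sup conditions for the form a
    (γ : ℝ) (hγ : 0 < γ)
    (ha1 : ∀ y : Y, γ * ‖y‖ ≤ ⨆ p : {p : P // ‖p‖ ≤ 1}, a y p.1)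
    (ha2 : ∀ p : P, γ * ‖p‖ ≤ ⨆ y : {y : Y // ‖y‖ ≤ 1}, a y.1 p)
    -- B(μ) is not the null operator
    (hb : ∃ (u : U) (p : P), b u p ≠ 0) :
    -- E(μ) is inf-sup stable
    (∃ β > 0, ∀ p : P,
      β * ‖p‖ ≤ ⨆ x : {x : Y × U // ‖x‖ ≤ 1}, (a x.1.1 p + b x.1.2 p)) ∧
    -- D(μ) is coercive over the kernel of E(μ)
    (∃ c > 0, ∀ x : Y × U, (∀ p : P, a x.1 p + b x.2 p = 0) →
      c * ‖x‖ ^ 2 ≤ m (O x.1) (O x.1) + α * n x.2 x.2) ∧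
    -- consequently the saddle-point optimality system has a unique solution
    (∀ (g : (Y × U) →L[ℝ] ℝ) (F : P →L[ℝ] ℝ),
      ∃! xp : (Y × U) × P,
        (∀ w : Y × U,
          m (O xp.1.1) (O w.1) + α * n xp.1.2 w.2 + a w.1 xp.2 + b w.2 xp.2 = g w) ∧
        (∀ q : P, a xp.1.1 q + b xp.1.2 q = F q)) := by
  classical
  -- the operator associated with `a`
  obtain ⟨Aop, hAop⟩ : ∃ A : Y →L[ℝ] P, ∀ (y : Y) (p : P), (inner ℝ (A y) p : ℝ) = a y p :=
    ⟨stmt3AuxOp a, stmt3AuxOp_inner a⟩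
  have hAnorm : ∀ y : Y, γ * ‖y‖ ≤ ‖Aop y‖ := by
    intro y
    haveI : Nonempty {p : P // ‖p‖ ≤ 1} := ⟨⟨0, by simp⟩⟩
    refine (ha1 y).trans (ciSup_le fun p => ?_)
    calc a y p.1 = (inner ℝ (Aop y) p.1 : ℝ) := (hAop y p.1).symm
      _ ≤ ‖Aop y‖ * ‖p.1‖ := real_inner_le_norm _ _
      _ ≤ ‖Aop y‖ * 1 := mul_le_mul_of_nonneg_left p.2 (norm_nonneg _)
      _ = ‖Aop y‖ := mul_one _
  have hAsurj : ∀ p : P, (∀ y : Y, (inner ℝ (Aop y) p : ℝ) = 0) → p = 0 := by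
    intro p hp
    have h0 : ∀ y : Y, a y p = 0 := fun y => by rw [← hAop y p]; exact hp y
    have hs : (⨆ y : {y : Y // ‖y‖ ≤ 1}, a y.1 p) = 0 := by
      haveI : Nonempty {y : Y // ‖y‖ ≤ 1} := ⟨⟨0, by simp⟩⟩
      simp only [h0]
      exact ciSup_const
    have h1 := ha2 p
    rw [hs] at h1
    have h2 : ‖p‖ ≤ 0 := by nlinarith [norm_nonneg p]
    exact norm_eq_zero.mp (le_antisymm h2 (norm_nonneg p))
  have hAinj : ∀ y y' : Y, Aop y = Aop y' → y = y' := by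
    intro y y' h
    have h1 := hAnorm (y - y')
    rw [map_sub, h, sub_self, norm_zero] at h1
    have h2 : ‖y - y'‖ ≤ 0 := by nlinarith [norm_nonneg (y - y')]
    exact sub_eq_zero.mp (norm_eq_zero.mp (le_antisymm h2 (norm_nonneg _)))
  obtain ⟨hAker, hArange⟩ := stmt3Aux_bij Aop γ hγ hAnorm hAsurj
  obtain ⟨Ainv, hAinv⟩ : ∃ Ainv : P →L[ℝ] Y, ∀ v : P, Aop (Ainv v) = v :=
    ⟨(ContinuousLinearEquiv.ofBijective Aop hAker hArange).symm.toContinuousLinearMap,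
      fun v => (ContinuousLinearEquiv.ofBijective Aop hAker hArange).apply_symm_apply v⟩
  have hAinv' : ∀ y : Y, Ainv (Aop y) = y := fun y => hAinj _ _ (hAinv (Aop y))
  -- the operator associated with `b`
  obtain ⟨Bop, hBop⟩ : ∃ B : U →L[ℝ] P, ∀ (u : U) (p : P), (inner ℝ (B u) p : ℝ) = b u p :=
    ⟨stmt3AuxOp b, stmt3AuxOp_inner b⟩
  -- the lift `T : U → Y` with `A (T u) = -(B u)`
  obtain ⟨T, hT⟩ : ∃ T : U →L[ℝ] Y, ∀ (u : U) (q : P), a (T u) q = -(b u q) := by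
    refine ⟨-(Ainv.comp Bop), fun u q => ?_⟩
    have h1 : Aop ((-(Ainv.comp Bop)) u) = -(Bop u) := by
      simp only [ContinuousLinearMap.neg_apply, ContinuousLinearMap.coe_comp',
        Function.comp_apply, map_neg]
      rw [hAinv]
    rw [← hAop, h1, inner_neg_left, hBop]
  -- the reduced bilinear form `k` on `U`
  obtain ⟨k, hk⟩ : ∃ k : U →L[ℝ] U →L[ℝ] ℝ,
      ∀ u v : U, k u v = m (O (T u)) (O (T v)) + α * n u v := by
    refine ⟨((m.comp (O.comp T)).flip.comp (O.comp T)).flip + α • n, fun u v => ?_⟩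
    simp [ContinuousLinearMap.add_apply, ContinuousLinearMap.flip_apply,
      ContinuousLinearMap.comp_apply, ContinuousLinearMap.smul_apply, smul_eq_mul]
  obtain ⟨Kop, hKop⟩ : ∃ K : U →L[ℝ] U, ∀ u v : U, (inner ℝ (K u) v : ℝ) = k u v :=
    ⟨stmt3AuxOp k, stmt3AuxOp_inner k⟩
  have hkcoer : ∀ u : U, α * cn * ‖u‖ ^ 2 ≤ k u u := by
    intro u
    rw [hk]
    have h1 : 0 ≤ m (O (T u)) (O (T u)) := hm_pos _
    have h2 : α * (cn * ‖u‖ ^ 2) ≤ α * n u u := mul_le_mul_of_nonneg_left (hn_coer u) hα.le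
    nlinarith
  have hKnorm : ∀ u : U, (α * cn) * ‖u‖ ≤ ‖Kop u‖ := by
    intro u
    rcases eq_or_ne u 0 with h | h
    · simp [h]
    · have hu : 0 < ‖u‖ := norm_pos_iff.mpr h
      have h1 : α * cn * ‖u‖ ^ 2 ≤ k u u := hkcoer u
      have h2 : k u u ≤ ‖Kop u‖ * ‖u‖ := by
        rw [← hKop]
        exact real_inner_le_norm _ _
      nlinarith
  have hKsurj : ∀ v : U, (∀ u : U, (inner ℝ (Kop u) v : ℝ) = 0) → v = 0 := by
    intro v hv
    have h1 := hv v
    rw [hKop] at h1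
    have h2 := hkcoer v
    have h3 : ‖v‖ ^ 2 ≤ 0 := by nlinarith [mul_pos hα hcn]
    have h4 : ‖v‖ ^ 2 = 0 := le_antisymm h3 (sq_nonneg _)
    have h5 : ‖v‖ = 0 := pow_eq_zero_iff (by norm_num : (2:ℕ) ≠ 0) |>.mp h4
    exact norm_eq_zero.mp h5
  obtain ⟨hKker, hKrange⟩ := stmt3Aux_bij Kop (α * cn) (by positivity) hKnorm hKsurj
  obtain ⟨Kinv, hKinv⟩ : ∃ Kinv : U →L[ℝ] U, ∀ v : U, Kop (Kinv v) = v :=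
    ⟨(ContinuousLinearEquiv.ofBijective Kop hKker hKrange).symm.toContinuousLinearMap,
      fun v => (ContinuousLinearEquiv.ofBijective Kop hKker hKrange).apply_symm_apply v⟩
  refine ⟨⟨γ, hγ, ?_⟩, ?_, ?_⟩
  · -- inf-sup stability of E
    intro p
    haveI : Nonempty {y : Y // ‖y‖ ≤ 1} := ⟨⟨0, by simp⟩⟩
    have hbdd : BddAbove (Set.range fun x : {x : Y × U // ‖x‖ ≤ 1} =>
        a x.1.1 p + b x.1.2 p) := by
      refine ⟨‖a.flip p‖ + ‖b.flip p‖, ?_⟩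
      rintro r ⟨x, rfl⟩
      have h1 : a x.1.1 p ≤ ‖a.flip p‖ := by
        calc a x.1.1 p = a.flip p x.1.1 := rfl
          _ ≤ |a.flip p x.1.1| := le_abs_self _
          _ ≤ ‖a.flip p‖ * ‖x.1.1‖ := (a.flip p).le_opNorm _
          _ ≤ ‖a.flip p‖ * 1 :=
              mul_le_mul_of_nonneg_left (le_trans (norm_fst_le x.1) x.2) (norm_nonneg _)
          _ = ‖a.flip p‖ := mul_one _
      have h2 : b x.1.2 p ≤ ‖b.flip p‖ := by
        calc b x.1.2 p = b.flip p x.1.2 := rfl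
          _ ≤ |b.flip p x.1.2| := le_abs_self _
          _ ≤ ‖b.flip p‖ * ‖x.1.2‖ := (b.flip p).le_opNorm _
          _ ≤ ‖b.flip p‖ * 1 :=
              mul_le_mul_of_nonneg_left (le_trans (norm_snd_le x.1) x.2) (norm_nonneg _)
          _ = ‖b.flip p‖ := mul_one _
      exact add_le_add h1 h2
    refine (ha2 p).trans (ciSup_le fun y => ?_)
    refine le_ciSup_of_le hbdd ⟨(y.1, (0:U)), ?_⟩ ?_
    · rw [Prod.norm_def]
      exact max_le (by simpa using y.2) (by simp)
    · simp
  · -- coercivity of D over ker E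
    set M : ℝ := max (‖b‖ / γ) 1 with hMdef
    have hM1 : (1:ℝ) ≤ M := le_max_right _ _
    have hM0 : (0:ℝ) < M := lt_of_lt_of_le one_pos hM1
    refine ⟨α * cn / M ^ 2, by positivity, ?_⟩
    intro x hx
    haveI : Nonempty {p : P // ‖p‖ ≤ 1} := ⟨⟨0, by simp⟩⟩
    have hy : γ * ‖x.1‖ ≤ ‖b‖ * ‖x.2‖ := by
      refine (ha1 x.1).trans (ciSup_le fun p => ?_)
      calc a x.1 p.1 = -(b x.2 p.1) := by linarith [hx p.1]
        _ ≤ |b x.2 p.1| := neg_le_abs _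
        _ ≤ ‖b x.2‖ * ‖p.1‖ := (b x.2).le_opNorm _
        _ ≤ ‖b x.2‖ * 1 := mul_le_mul_of_nonneg_left p.2 (norm_nonneg _)
        _ = ‖b x.2‖ := mul_one _
        _ ≤ ‖b‖ * ‖x.2‖ := b.le_opNorm _
    have hx1 : ‖x.1‖ ≤ M * ‖x.2‖ := by
      have h1 : ‖x.1‖ ≤ ‖b‖ / γ * ‖x.2‖ := by
        rw [div_mul_eq_mul_div, le_div_iff₀ hγ]
        nlinarith
      calc ‖x.1‖ ≤ ‖b‖ / γ * ‖x.2‖ := h1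
        _ ≤ M * ‖x.2‖ := mul_le_mul_of_nonneg_right (le_max_left _ _) (norm_nonneg _)
    have hx2 : ‖x.2‖ ≤ M * ‖x.2‖ := le_mul_of_one_le_left (norm_nonneg _) hM1
    have hxn : ‖x‖ ≤ M * ‖x.2‖ := by
      rw [Prod.norm_def]
      exact max_le hx1 hx2
    have hsq : ‖x‖ ^ 2 ≤ M ^ 2 * ‖x.2‖ ^ 2 := by nlinarith [norm_nonneg x, norm_nonneg x.2]
    have hn' : α * (cn * ‖x.2‖ ^ 2) ≤ α * n x.2 x.2 :=
      mul_le_mul_of_nonneg_left (hn_coer x.2) hα.le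
    have hm' : 0 ≤ m (O x.1) (O x.1) := hm_pos _
    have hdiv : α * cn / M ^ 2 * M ^ 2 = α * cn := div_mul_cancel₀ _ (by positivity)
    nlinarith [mul_le_mul_of_nonneg_left hsq
      (le_of_lt (show (0:ℝ) < α * cn / M ^ 2 by positivity))]
  · -- unique solvability of the saddle-point system
    intro g F
    obtain ⟨y₀, hy₀⟩ : ∃ y₀ : Y, ∀ q : P, a y₀ q = F q := by
      refine ⟨Ainv ((toDual ℝ P).symm F), fun q => ?_⟩
      rw [← hAop, hAinv]
      exact toDual_symm_apply
    obtain ⟨l, hl⟩ : ∃ l : U →L[ℝ] ℝ, ∀ v : U, l v = g (T v, v) - m (O y₀) (O (T v)) := by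
      refine ⟨g.comp (T.prod (ContinuousLinearMap.id ℝ U)) - (m (O y₀)).comp (O.comp T),
        fun v => ?_⟩
      simp [ContinuousLinearMap.sub_apply, ContinuousLinearMap.comp_apply,
        ContinuousLinearMap.prod_apply]
    obtain ⟨u, hu⟩ : ∃ u : U, ∀ v : U, k u v = l v := by
      refine ⟨Kinv ((toDual ℝ U).symm l), fun v => ?_⟩
      rw [← hKop, hKinv]
      exact toDual_symm_apply
    obtain ⟨y, hy⟩ : ∃ y : Y, y = y₀ + T u := ⟨_, rfl⟩
    obtain ⟨p, hp⟩ : ∃ p : P, ∀ w1 : Y, a w1 p = g (w1, 0) - m (O y) (O w1) := by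
      refine ⟨(toDual ℝ P).symm
        ((g.comp (ContinuousLinearMap.inl ℝ Y U) - (m (O y)).comp O).comp Ainv),
        fun w1 => ?_⟩
      rw [← hAop, real_inner_comm, toDual_symm_apply]
      simp [ContinuousLinearMap.sub_apply, ContinuousLinearMap.comp_apply,
        ContinuousLinearMap.inl_apply, hAinv']
    have key2 : ∀ w2 : U, b w2 p = m (O y) (O (T w2)) - g (T w2, 0) := by
      intro w2
      have h1 := hT w2 p
      have h2 := hp (T w2)
      linarith
    have key3 : ∀ w2 : U, α * n u w2 = g (T w2, w2) - m (O y) (O (T w2)) := by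
      intro w2
      have h1 := hu w2
      rw [hk, hl] at h1
      have h2 : m (O y) (O (T w2)) = m (O y₀) (O (T w2)) + m (O (T u)) (O (T w2)) := by
        rw [hy]
        simp [map_add, ContinuousLinearMap.add_apply]
      linarith
    have hsol1 : ∀ w : Y × U,
        m (O y) (O w.1) + α * n u w.2 + a w.1 p + b w.2 p = g w := by
      intro w
      have hgw : g (w.1, 0) + g (0, w.2) = g w := by
        rw [← map_add]
        congr 1
        simp
      have hgw2 : g (T w.2, w.2) - g (T w.2, 0) = g (0, w.2) := by
        rw [← map_sub]
        congr 1
        simp [Prod.mk_sub_mk]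
      have h1 := hp w.1
      have h2 := key2 w.2
      have h3 := key3 w.2
      linarith
    have hsol2 : ∀ q : P, a y q + b u q = F q := by
      intro q
      have h1 : a y q = a y₀ q + a (T u) q := by
        rw [hy]
        simp [map_add, ContinuousLinearMap.add_apply]
      rw [h1, hy₀ q, hT u q]
      ring
    refine ⟨((y, u), p), ⟨hsol1, hsol2⟩, ?_⟩
    rintro ⟨⟨zy, zu⟩, zp⟩ ⟨hz1, hz2⟩
    have hdE : ∀ q : P, a (zy - y) q + b (zu - u) q = 0 := by
      intro q
      have h1 := hz2 q
      have h2 := hsol2 q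
      simp only [map_sub, ContinuousLinearMap.sub_apply]
      linarith
    have hdD : ∀ w : Y × U, m (O (zy - y)) (O w.1) + α * n (zu - u) w.2
        + a w.1 (zp - p) + b w.2 (zp - p) = 0 := by
      intro w
      have h1 := hz1 w
      have h2 := hsol1 w
      simp only [map_sub, ContinuousLinearMap.sub_apply]
      have h3 : α * (n zu w.2 - n u w.2) = α * n zu w.2 - α * n u w.2 := by ring
      linarith [h3]
    have hquad := hdD (zy - y, zu - u)
    have hker0 : a (zy - y) (zp - p) + b (zu - u) (zp - p) = 0 := hdE (zp - p)
    have hmm : 0 ≤ m (O (zy - y)) (O (zy - y)) := hm_pos _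
    have hnn : α * (cn * ‖zu - u‖ ^ 2) ≤ α * n (zu - u) (zu - u) :=
      mul_le_mul_of_nonneg_left (hn_coer _) hα.le
    have hdu2 : ‖zu - u‖ ^ 2 ≤ 0 := by nlinarith [mul_pos hα hcn]
    have hdu : zu = u := by
      have h4 : ‖zu - u‖ ^ 2 = 0 := le_antisymm hdu2 (sq_nonneg _)
      have h5 : ‖zu - u‖ = 0 := pow_eq_zero_iff (by norm_num : (2:ℕ) ≠ 0) |>.mp h4
      exact sub_eq_zero.mp (norm_eq_zero.mp h5)
    have hdy : zy = y := by
      have h0 : ∀ q : P, a (zy - y) q = 0 := by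
        intro q
        have h1 := hdE q
        rw [hdu] at h1
        simpa using h1
      have hA0 : Aop (zy - y) = 0 := by
        have h1 : (inner ℝ (Aop (zy - y)) (Aop (zy - y)) : ℝ) = 0 := by
          rw [hAop]
          exact h0 _
        exact inner_self_eq_zero.mp h1
      have h2 := hAnorm (zy - y)
      rw [hA0, norm_zero] at h2
      have h3 : ‖zy - y‖ ≤ 0 := by nlinarith [norm_nonneg (zy - y)]
      exact sub_eq_zero.mp (norm_eq_zero.mp (le_antisymm h3 (norm_nonneg _)))
    have hdp : zp = p := by
      have h0 : ∀ w1 : Y, a w1 (zp - p) = 0 := by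
        intro w1
        have h1 := hdD (w1, 0)
        rw [hdy, hdu] at h1
        simpa using h1
      have h1 := hAsurj (zp - p) (fun w1 => by rw [hAop]; exact h0 w1)
      exact sub_eq_zero.mp h1
    simp only [Prod.mk.injEq]
    exact ⟨⟨hdy, hdu⟩, hdp⟩
end

section
/- (POD optimality) Among all N-dimensional subspaces V of the span of the snapshots y_1,…,y_M in a Hilbert space Y, the POD space Y^N spanned by the first N POD modes minimizes the mean squared projection error (1/M) Σ_{k=1}^M ‖y_k − Π_V y_k‖²_Y, where Π_V denotes the Y-orthogonal projection onto V, and the minimal value equals Σ_{k=N+1}^M λ_k. -/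
open scoped RealInnerProductSpace

open Matrix

section PODhelpers
variable {Y : Type*} [NormedAddCommGroup Y] [InnerProductSpace ℝ Y]

lemma aux_inner_sum_smul {ι κ : Type*} (s : Finset ι) (t : Finset κ)
    (a : ι → ℝ) (b : κ → ℝ) (u : ι → Y) (v : κ → Y) :
    ⟪∑ i ∈ s, a i • u i, ∑ j ∈ t, b j • v j⟫ = ∑ i ∈ s, ∑ j ∈ t, a i * b j * ⟪u i, v j⟫ := by
  rw [sum_inner]
  refine Finset.sum_congr rfl fun i _ => ?_
  rw [inner_sum]
  refine Finset.sum_congr rfl fun j _ => ?_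
  rw [real_inner_smul_left, real_inner_smul_right]; ring

lemma aux_proj_unique (S : Submodule ℝ Y) (v p q : Y) (hp : p ∈ S)
    (hport : ∀ w ∈ S, ⟪v - p, w⟫ = 0) (hq : q ∈ S)
    (hqort : ∀ w ∈ S, ⟪v - q, w⟫ = 0) : p = q := by
  have h0 : ⟪p - q, p - q⟫ = 0 := by
    have h1 := hport (p - q) (S.sub_mem hp hq)
    have h2 := hqort (p - q) (S.sub_mem hp hq)
    calc ⟪p - q, p - q⟫ = ⟪(v - q) - (v - p), p - q⟫ := by congr 1; abel
      _ = 0 := by rw [inner_sub_left, h1, h2, sub_zero]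
  exact sub_eq_zero.mp (inner_self_eq_zero.mp h0)

lemma aux_orth_span (v : Y) (s : Set Y) (h : ∀ w ∈ s, ⟪v, w⟫ = 0) :
    ∀ w ∈ Submodule.span ℝ s, ⟪v, w⟫ = 0 := by
  intro w hw
  induction hw using Submodule.span_induction with
  | mem x hx => exact h x hx
  | zero => simp
  | add x y _ _ hx hy => rw [inner_add_right, hx, hy, add_zero]
  | smul c x _ hx => rw [real_inner_smul_right, hx, mul_zero]

lemma aux_col_orth {M : ℕ} (e : Fin M → Fin M → ℝ)
    (horth : ∀ n m, dotProduct (e n) (e m) = if n = m then 1 else 0) :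
    ∀ k l, (∑ n, e n k * e n l) = if k = l then (1:ℝ) else 0 := by
  have hE : (Matrix.of e) * (Matrix.of e)ᵀ = 1 := by
    ext n m
    simpa [Matrix.mul_apply, Matrix.transpose_apply, Matrix.one_apply,
      dotProduct] using horth n m
  have hE' : (Matrix.of e)ᵀ * (Matrix.of e) = 1 := mul_eq_one_comm.mp hE
  intro k l
  have h2 := congrFun (congrFun hE' k) l
  simpa [Matrix.mul_apply, Matrix.transpose_apply, Matrix.one_apply] using h2

end PODhelpers

/-- POD optimality: among all `N`-dimensional subspaces `V` of the span of the snapshots, the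
POD space `Y^N` minimizes the mean squared projection error
`(1/M) Σ_k ‖y_k − Π_V y_k‖²`, and the minimal value equals `Σ_{k=N+1}^M λ_k`. -/
theorem stmt_10 {Y : Type*} [NormedAddCommGroup Y] [InnerProductSpace ℝ Y]
    (M N : ℕ) (hM : 0 < M) (hN : N ≤ M) (y : Fin M → Y)
    (C : Matrix (Fin M) (Fin M) ℝ)
    (hC : ∀ i j, C i j = (1 / (M : ℝ)) * ⟪y i, y j⟫)
    (lam : Fin M → ℝ) (e : Fin M → (Fin M → ℝ))
    (heig : ∀ n, C.mulVec (e n) = lam n • e n)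
    (horth : ∀ n m, dotProduct (e n) (e m) = if n = m then 1 else 0)
    (hsort : ∀ i j : Fin M, i ≤ j → lam j ≤ lam i)
    (hnonneg : ∀ n, 0 ≤ lam n)
    (hpos : ∀ n : Fin M, (n : ℕ) < N → 0 < lam n)
    (η : Fin M → Y)
    (hη : ∀ n : Fin M, (n : ℕ) < N →
      η n = (Real.sqrt (lam n))⁻¹ • ∑ k, e n k • y k)
    (S : Submodule ℝ Y)
    (hS : S = Submodule.span ℝ {v | ∃ n : Fin M, (n : ℕ) < N ∧ v = η n})
    (P : Y → Y) (hPmem : ∀ v, P v ∈ S) (hPorth : ∀ v, ∀ w ∈ S, ⟪v - P v, w⟫ = 0) :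
    -- lower bound for every N-dimensional subspace V of the snapshot span
    (∀ V : Submodule ℝ Y, V ≤ Submodule.span ℝ (Set.range y) →
      Module.finrank ℝ V = N →
      ∀ PV : Y → Y, (∀ v, PV v ∈ V) → (∀ v, ∀ w ∈ V, ⟪v - PV v, w⟫ = 0) →
        (∑ k ∈ Finset.univ.filter (fun k : Fin M => N ≤ (k : ℕ)), lam k) ≤
          (1 / (M : ℝ)) * ∑ k, ‖y k - PV (y k)‖ ^ 2) ∧
    -- the POD space attains the minimum
    ((1 / (M : ℝ)) * ∑ k, ‖y k - P (y k)‖ ^ 2 =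
      ∑ k ∈ Finset.univ.filter (fun k : Fin M => N ≤ (k : ℕ)), lam k) := by
  classical
  have hMR : (0:ℝ) < M := by exact_mod_cast hM
  have hcol := aux_col_orth e horth
  have hdot : ∀ n m, (∑ k, e n k * e m k) = if n = m then (1:ℝ) else 0 := by
    intro n m; have := horth n m; simpa [dotProduct] using this
  have hCy : ∀ k l, ⟪y k, y l⟫ = (M:ℝ) * C k l := by
    intro k l
    rw [hC k l]
    field_simp
  set z : Fin M → Y := fun n => ∑ k, e n k • y k with hz
  have hzz : ∀ n m, ⟪z n, z m⟫ = if n = m then (M:ℝ) * lam n else 0 := by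
    intro n m
    have step1 : ∀ k, (∑ l, e n k * e m l * ⟪y k, y l⟫)
        = e n k * e m k * ((M:ℝ) * lam m) := by
      intro k
      have hmv : (∑ l, C k l * e m l) = lam m * e m k := by
        have := congrFun (heig m) k
        simpa [Matrix.mulVec, dotProduct, smul_eq_mul] using this
      calc (∑ l, e n k * e m l * ⟪y k, y l⟫)
          = ∑ l, (e n k * (M:ℝ)) * (C k l * e m l) := by
            refine Finset.sum_congr rfl fun l _ => ?_
            rw [hCy k l]; ring
        _ = (e n k * (M:ℝ)) * ∑ l, C k l * e m l := by rw [Finset.mul_sum]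
        _ = e n k * e m k * ((M:ℝ) * lam m) := by rw [hmv]; ring
    have : ⟪z n, z m⟫ = ∑ k, e n k * e m k * ((M:ℝ) * lam m) := by
      rw [hz]
      rw [aux_inner_sum_smul]
      exact Finset.sum_congr rfl fun k _ => step1 k
    rw [this, ← Finset.sum_mul, hdot n m]
    split_ifs with h
    · subst h; ring
    · ring
  have hrec : ∀ k, (∑ n, e n k • z n) = y k := by
    intro k
    calc ∑ n, e n k • z n = ∑ n, ∑ l, (e n k * e n l) • y l := by
          refine Finset.sum_congr rfl fun n _ => ?_
          rw [hz, Finset.smul_sum]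
          exact Finset.sum_congr rfl fun l _ => (smul_smul _ _ _)
      _ = ∑ l, (∑ n, e n k * e n l) • y l := by
          rw [Finset.sum_comm]
          exact Finset.sum_congr rfl fun l _ => (Finset.sum_smul).symm
      _ = y k := by
          simp [hcol, ite_smul]
  have hzdef : ∀ n, z n = ∑ k, e n k • y k := fun n => rfl
  set Q : Finset (Fin M) := Finset.univ.filter (fun n : Fin M => N ≤ (n:ℕ)) with hQ
  have hzmem : ∀ n : Fin M, (n:ℕ) < N → z n ∈ S := by
    intro n hn
    have hsq0 : Real.sqrt (lam n) ≠ 0 := ne_of_gt (Real.sqrt_pos.mpr (hpos n hn))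
    have hη' : η n ∈ S := by rw [hS]; exact Submodule.subset_span ⟨n, hn, rfl⟩
    have hzn : z n = Real.sqrt (lam n) • η n := by
      rw [hη n hn, smul_smul, mul_inv_cancel₀ hsq0, one_smul, hzdef]
    rw [hzn]; exact S.smul_mem _ hη'
  have hres : ∀ k, y k - P (y k) = ∑ n ∈ Q, e n k • z n := by
    intro k
    have h1 : (∑ n ∈ Finset.univ.filter (fun n : Fin M => ¬ N ≤ (n:ℕ)), e n k • z n) ∈ S := by
      refine Submodule.sum_mem S fun n hn => ?_
      simp only [Finset.mem_filter, Finset.mem_univ, true_and, not_le] at hn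
      exact S.smul_mem _ (hzmem n hn)
    have hsplit : y k - ∑ n ∈ Q, e n k • z n
        = ∑ n ∈ Finset.univ.filter (fun n : Fin M => ¬ N ≤ (n:ℕ)), e n k • z n := by
      rw [← hrec k, hQ, ← Finset.sum_filter_add_sum_filter_not Finset.univ
        (fun n : Fin M => N ≤ (n:ℕ)) (fun n => e n k • z n)]
      abel
    have horthr : ∀ w ∈ S, ⟪∑ n ∈ Q, e n k • z n, w⟫ = 0 := by
      rw [hS]
      refine aux_orth_span _ _ ?_
      rintro w ⟨n, hn, rfl⟩
      rw [hη n hn, real_inner_smul_right, ← hzdef n]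
      have h0 : ⟪∑ m ∈ Q, e m k • z m, z n⟫ = 0 := by
        rw [sum_inner]
        refine Finset.sum_eq_zero fun m hm => ?_
        rw [real_inner_smul_left]
        have hmn : m ≠ n := by
          intro h; subst h
          rw [hQ] at hm
          simp only [Finset.mem_filter, Finset.mem_univ, true_and] at hm
          omega
        rw [hzz m n, if_neg hmn, mul_zero]
      rw [h0, mul_zero]
    have heq : P (y k) = y k - ∑ n ∈ Q, e n k • z n := by
      refine aux_proj_unique S (y k) _ _ (hPmem (y k)) (hPorth (y k)) ?_ ?_
      · rw [hsplit]; exact h1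
      · intro w hw
        have : y k - (y k - ∑ n ∈ Q, e n k • z n) = ∑ n ∈ Q, e n k • z n := by abel
        rw [this]; exact horthr w hw
    rw [heq]; abel
  have part2 : (1 / (M : ℝ)) * ∑ k, ‖y k - P (y k)‖ ^ 2 = ∑ k ∈ Q, lam k := by
    have hnormk : ∀ k, ‖y k - P (y k)‖ ^ 2 = ∑ n ∈ Q, (e n k * e n k) * ((M:ℝ) * lam n) := by
      intro k
      rw [← real_inner_self_eq_norm_sq, hres k, aux_inner_sum_smul]
      refine Finset.sum_congr rfl fun n hn => ?_
      rw [Finset.sum_eq_single_of_mem n hn (fun m _ hm => by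
        rw [hzz n m, if_neg (fun h => hm h.symm), mul_zero])]
      rw [hzz n n, if_pos rfl]
    have hsum : ∑ k, ‖y k - P (y k)‖ ^ 2 = (M:ℝ) * ∑ n ∈ Q, lam n := by
      calc ∑ k, ‖y k - P (y k)‖^2
          = ∑ k, ∑ n ∈ Q, (e n k * e n k) * ((M:ℝ)*lam n) :=
            Finset.sum_congr rfl fun k _ => hnormk k
        _ = ∑ n ∈ Q, (∑ k, e n k * e n k) * ((M:ℝ)*lam n) := by
            rw [Finset.sum_comm]
            exact Finset.sum_congr rfl fun n _ => (Finset.sum_mul _ _ _).symm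
        _ = ∑ n ∈ Q, (M:ℝ) * lam n := by
            refine Finset.sum_congr rfl fun n _ => ?_
            rw [hdot n n, if_pos rfl, one_mul]
        _ = (M:ℝ) * ∑ n ∈ Q, lam n := by rw [Finset.mul_sum]
    rw [hsum]
    field_simp
  refine ⟨?_, part2⟩
  intro V hV hrank PV hPVmem hPVorth
  by_cases hNM : N = M
  · have hQe : Q = ∅ := by
      rw [hQ]; ext n
      simp only [Finset.mem_filter, Finset.mem_univ, true_and, Finset.notMem_empty,
        iff_false, not_le]
      omega
    rw [hQe, Finset.sum_empty]
    have h1 : (0:ℝ) ≤ ∑ k, ‖y k - PV (y k)‖^2 :=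
      Finset.sum_nonneg fun k _ => by positivity
    have h2 : (0:ℝ) ≤ 1 / (M:ℝ) := by positivity
    exact mul_nonneg h2 h1
  · have hNM' : N < M := lt_of_le_of_ne hN hNM
    have hyy : ∀ k l, ⟪y k, y l⟫ = ∑ n, ((M:ℝ) * lam n) * (e n k * e n l) := by
      intro k l
      rw [← hrec k, ← hrec l, aux_inner_sum_smul]
      refine Finset.sum_congr rfl fun n _ => ?_
      rw [Finset.sum_eq_single_of_mem n (Finset.mem_univ n) (fun m _ hm => by
        rw [hzz n m, if_neg (fun h => hm h.symm), mul_zero])]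
      rw [hzz n n, if_pos rfl]; ring
    haveI : FiniteDimensional ℝ (Submodule.span ℝ (Set.range y)) :=
      FiniteDimensional.span_of_finite ℝ (Set.finite_range y)
    haveI : FiniteDimensional ℝ V := Submodule.finiteDimensional_of_le hV
    let b : OrthonormalBasis (Fin N) ℝ V :=
      (stdOrthonormalBasis ℝ V).reindex (finCongr hrank)
    set ψ : Fin N → Y := fun i => (b i : Y) with hψ
    have hψV : ∀ i, ψ i ∈ V := fun i => (b i).2
    have hψo : ∀ i j, ⟪ψ i, ψ j⟫ = if i = j then (1:ℝ) else 0 := by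
      intro i j
      have h := orthonormal_iff_ite.mp b.orthonormal i j
      rw [Submodule.coe_inner] at h
      exact h
    have hVspan : V = Submodule.span ℝ (Set.range ψ) := by
      have h1 : Submodule.span ℝ (Set.range b.toBasis) = ⊤ := b.toBasis.span_eq
      have h2 : Set.range ψ = V.subtype '' Set.range b.toBasis := by
        rw [b.coe_toBasis]
        ext w
        simp [hψ]
      rw [h2, Submodule.span_image, h1, Submodule.map_top, Submodule.range_subtype]
    have hproj : ∀ k, PV (y k) = ∑ i, ⟪y k, ψ i⟫ • ψ i := by
      intro k
      refine aux_proj_unique V (y k) _ _ (hPVmem (y k)) (hPVorth (y k))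
        (Submodule.sum_mem V fun i _ => V.smul_mem _ (hψV i)) ?_
      intro w hw
      rw [hVspan] at hw
      refine aux_orth_span _ _ ?_ w hw
      rintro w' ⟨i, rfl⟩
      rw [inner_sub_left, sum_inner]
      have h3 : ∀ j : Fin N, ⟪(⟪y k, ψ j⟫:ℝ) • ψ j, ψ i⟫
          = ⟪y k, ψ j⟫ * (if j = i then (1:ℝ) else 0) := fun j => by
        rw [real_inner_smul_left, hψo j i]
      rw [Finset.sum_congr rfl fun j _ => h3 j]
      simp [mul_ite, Finset.sum_ite_eq']
    have hc : ∀ i, ∃ cc : Fin M → ℝ, ∑ kk, cc kk • y kk = ψ i := by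
      intro i
      exact (Submodule.mem_span_range_iff_exists_fun ℝ).mp (hV (hψV i))
    choose c hcψ using hc
    set α : Fin N → Fin M → ℝ := fun i n => ∑ l, e n l * c i l with hα
    have key : ∀ (a bb : Fin M → ℝ), ⟪∑ k, a k • y k, ∑ l, bb l • y l⟫
        = ∑ n, ((M:ℝ) * lam n) * ((∑ k, e n k * a k) * (∑ l, e n l * bb l)) := by
      intro a bb
      rw [aux_inner_sum_smul]
      calc ∑ k, ∑ l, a k * bb l * ⟪y k, y l⟫
          = ∑ k, ∑ l, ∑ n, ((M:ℝ) * lam n) * ((e n k * a k) * (e n l * bb l)) := by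
            refine Finset.sum_congr rfl fun k _ => Finset.sum_congr rfl fun l _ => ?_
            rw [hyy k l, Finset.mul_sum]
            exact Finset.sum_congr rfl fun n _ => by ring
        _ = ∑ k, ∑ n, ∑ l, ((M:ℝ) * lam n) * ((e n k * a k) * (e n l * bb l)) :=
            Finset.sum_congr rfl fun k _ => Finset.sum_comm
        _ = ∑ n, ∑ k, ∑ l, ((M:ℝ) * lam n) * ((e n k * a k) * (e n l * bb l)) :=
            Finset.sum_comm
        _ = ∑ n, ((M:ℝ) * lam n) * ((∑ k, e n k * a k) * (∑ l, e n l * bb l)) := by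
            refine Finset.sum_congr rfl fun n _ => ?_
            rw [Finset.sum_mul_sum, Finset.mul_sum]
            refine Finset.sum_congr rfl fun k _ => ?_
            rw [Finset.mul_sum]
    have hψψ : ∀ i j, (∑ n, ((M:ℝ)*lam n) * (α i n * α j n)) = if i = j then (1:ℝ) else 0 := by
      intro i j
      rw [← hψo i j, ← hcψ i, ← hcψ j, key]
    have hyψ : ∀ k i, ⟪y k, ψ i⟫ = ∑ n, ((M:ℝ) * lam n) * (e n k * α i n) := by
      intro k i
      rw [← hcψ i, inner_sum]
      calc ∑ l, ⟪y k, c i l • y l⟫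
          = ∑ l, ∑ n, ((M:ℝ)*lam n) * (e n k * (e n l * c i l)) := by
            refine Finset.sum_congr rfl fun l _ => ?_
            rw [real_inner_smul_right, hyy k l, Finset.mul_sum]
            exact Finset.sum_congr rfl fun n _ => by ring
        _ = ∑ n, ∑ l, ((M:ℝ)*lam n) * (e n k * (e n l * c i l)) := Finset.sum_comm
        _ = ∑ n, ((M:ℝ)*lam n) * (e n k * α i n) := by
            refine Finset.sum_congr rfl fun n _ => ?_
            rw [show α i n = ∑ l, e n l * c i l from rfl, Finset.mul_sum, Finset.mul_sum]
    have hMl : ∀ n : Fin M, (0:ℝ) ≤ (M:ℝ) * lam n :=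
      fun n => mul_nonneg (le_of_lt hMR) (hnonneg n)
    set B : Fin N → Fin M → ℝ := fun i n => Real.sqrt ((M:ℝ) * lam n) * α i n with hB
    have hsqB : ∀ n, Real.sqrt ((M:ℝ)*lam n) ^ 2 = (M:ℝ)*lam n :=
      fun n => Real.sq_sqrt (hMl n)
    have hBB : ∀ i j, (∑ n, B i n * B j n) = if i = j then (1:ℝ) else 0 := by
      intro i j
      rw [← hψψ i j]
      refine Finset.sum_congr rfl fun n _ => ?_
      have h4 := hsqB n
      calc B i n * B j n = Real.sqrt ((M:ℝ)*lam n)^2 * (α i n * α j n) := by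
            simp only [hB]; ring
        _ = ((M:ℝ)*lam n) * (α i n * α j n) := by rw [h4]
    set t : Fin M → ℝ := fun n => ∑ i, B i n ^ 2 with ht
    have ht0 : ∀ n, 0 ≤ t n := fun n => Finset.sum_nonneg fun i _ => sq_nonneg _
    have hsumt : ∑ n, t n = (N:ℝ) := by
      simp only [ht]
      rw [Finset.sum_comm]
      have h5 : ∀ i : Fin N, ∑ n, B i n ^ 2 = 1 := by
        intro i
        have h6 := hBB i i
        rw [if_pos rfl] at h6
        rw [← h6]
        exact Finset.sum_congr rfl fun n _ => sq (B i n)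
      rw [Finset.sum_congr rfl fun i _ => h5 i]
      simp
    have ht1 : ∀ n, t n ≤ 1 := by
      have hBm : (Matrix.of B) * (Matrix.of B)ᵀ = 1 := by
        ext i j
        simpa [Matrix.mul_apply, Matrix.transpose_apply, Matrix.one_apply] using hBB i j
      set G := (Matrix.of B)ᵀ * (Matrix.of B) with hGdef
      have hG : G * G = G := by
        rw [hGdef, Matrix.mul_assoc, ← Matrix.mul_assoc (Matrix.of B) ((Matrix.of B)ᵀ)
          (Matrix.of B), hBm, Matrix.one_mul]
      have hGnm : ∀ p q, G p q = ∑ i, B i p * B i q := by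
        intro p q; simp [hGdef, Matrix.mul_apply, Matrix.transpose_apply]
      intro n
      have htG : t n = G n n := by
        rw [hGnm]; simp only [ht]
        exact Finset.sum_congr rfl fun i _ => sq (B i n)
      have hGnn : G n n = ∑ m, G n m * G m n := by
        have h7 := congrFun (congrFun hG n) n
        rw [Matrix.mul_apply] at h7
        exact h7.symm
      have hsym : ∀ p q, G p q = G q p := fun p q => by
        rw [hGnm, hGnm]; exact Finset.sum_congr rfl fun i _ => mul_comm _ _
      have h6 : G n n ^ 2 ≤ G n n := by
        calc G n n ^ 2 = G n n * G n n := sq (G n n)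
          _ ≤ ∑ m, G n m * G m n := by
              refine Finset.single_le_sum (f := fun m => G n m * G m n) ?_ (Finset.mem_univ n)
              intro m _
              show (0:ℝ) ≤ G n m * G m n
              rw [hsym m n]
              exact mul_self_nonneg _
          _ = G n n := hGnn.symm
      nlinarith [htG, h6, ht0 n, sq_nonneg (G n n - 1)]
    have hpyth : ∀ k, ‖y k - PV (y k)‖^2 = ⟪y k, y k⟫ - ∑ i, ⟪y k, ψ i⟫^2 := by
      intro k
      have hp0 : ⟪y k - PV (y k), PV (y k)⟫ = 0 := hPVorth (y k) _ (hPVmem (y k))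
      have hip : ⟪y k, PV (y k)⟫ = ⟪PV (y k), PV (y k)⟫ := by
        rw [inner_sub_left] at hp0; linarith
      have h7 : ‖y k - PV (y k)‖^2 = ⟪y k, y k⟫ - ⟪PV (y k), PV (y k)⟫ := by
        rw [← real_inner_self_eq_norm_sq, inner_sub_left, inner_sub_right, inner_sub_right]
        linarith [real_inner_comm (PV (y k)) (y k), hip]
      rw [h7, hproj k]
      congr 1
      rw [aux_inner_sum_smul]
      refine Finset.sum_congr rfl fun i _ => ?_
      rw [Finset.sum_eq_single_of_mem i (Finset.mem_univ i) (fun j _ hj => by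
        rw [hψo i j, if_neg (fun h => hj h.symm), mul_zero])]
      rw [hψo i i, if_pos rfl]; ring
    have htr : ∑ k, ⟪y k, y k⟫ = ∑ n, ((M:ℝ) * lam n) := by
      calc ∑ k, ⟪y k, y k⟫ = ∑ k, ∑ n, ((M:ℝ)*lam n) * (e n k * e n k) :=
            Finset.sum_congr rfl fun k _ => hyy k k
        _ = ∑ n, ∑ k, ((M:ℝ)*lam n) * (e n k * e n k) := Finset.sum_comm
        _ = ∑ n, ((M:ℝ)*lam n) := by
            refine Finset.sum_congr rfl fun n _ => ?_
            rw [← Finset.mul_sum, hdot n n, if_pos rfl, mul_one]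
    have hPk : ∀ i, ∑ k, ⟪y k, ψ i⟫^2 = ∑ n, ((M:ℝ)*lam n) * B i n ^ 2 := by
      intro i
      calc ∑ k, ⟪y k, ψ i⟫^2
          = ∑ k, ∑ n, ∑ m, (((M:ℝ)*lam n) * (((M:ℝ)*lam m) * (α i n * α i m)))
              * (e n k * e m k) := by
            refine Finset.sum_congr rfl fun k _ => ?_
            rw [hyψ k i, sq, Finset.sum_mul_sum]
            exact Finset.sum_congr rfl fun n _ => Finset.sum_congr rfl fun m _ => by ring
        _ = ∑ n, ∑ m, ∑ k, (((M:ℝ)*lam n) * (((M:ℝ)*lam m) * (α i n * α i m)))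
              * (e n k * e m k) := by
            rw [Finset.sum_comm]
            exact Finset.sum_congr rfl fun n _ => Finset.sum_comm
        _ = ∑ n, ((M:ℝ)*lam n) * B i n ^ 2 := by
            refine Finset.sum_congr rfl fun n _ => ?_
            rw [Finset.sum_congr rfl fun m (_ : m ∈ Finset.univ) => (by rw [← Finset.mul_sum] :
              (∑ k, (((M:ℝ)*lam n) * (((M:ℝ)*lam m) * (α i n * α i m))) * (e n k * e m k))
              = (((M:ℝ)*lam n) * (((M:ℝ)*lam m) * (α i n * α i m))) * ∑ k, e n k * e m k)]
            rw [Finset.sum_congr rfl fun m (_ : m ∈ Finset.univ) => by rw [hdot n m]]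
            rw [Finset.sum_eq_single_of_mem n (Finset.mem_univ n) (fun m _ hm => by
              rw [if_neg (fun h => hm h.symm), mul_zero])]
            rw [if_pos rfl, mul_one]
            simp only [hB]
            rw [mul_pow, hsqB n]
            ring
    have hsumnorm : ∑ k, ‖y k - PV (y k)‖^2 = ∑ n, ((M:ℝ) * lam n) * (1 - t n) := by
      calc ∑ k, ‖y k - PV (y k)‖^2
          = ∑ k, (⟪y k, y k⟫ - ∑ i, ⟪y k, ψ i⟫^2) := Finset.sum_congr rfl fun k _ => hpyth k
        _ = (∑ k, ⟪y k, y k⟫) - ∑ k, ∑ i, ⟪y k, ψ i⟫^2 := Finset.sum_sub_distrib _ _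
        _ = (∑ n, ((M:ℝ)*lam n)) - ∑ n, ((M:ℝ)*lam n) * t n := by
            rw [htr, Finset.sum_comm]
            congr 1
            calc ∑ i : Fin N, ∑ k, ⟪y k, ψ i⟫^2
                = ∑ i : Fin N, ∑ n, ((M:ℝ)*lam n) * B i n^2 :=
                  Finset.sum_congr rfl fun i _ => hPk i
              _ = ∑ n, ∑ i : Fin N, ((M:ℝ)*lam n) * B i n^2 := Finset.sum_comm
              _ = ∑ n, ((M:ℝ)*lam n) * t n := by
                  refine Finset.sum_congr rfl fun n _ => ?_
                  rw [← Finset.mul_sum]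
        _ = ∑ n, ((M:ℝ)*lam n) * (1 - t n) := by
            rw [← Finset.sum_sub_distrib]
            exact Finset.sum_congr rfl fun n _ => by ring
    have hcard : (((Finset.univ.filter (fun n : Fin M => ¬ N ≤ (n:ℕ))).card : ℕ) : ℝ) = N := by
      have h10 : (Finset.univ.filter (fun n : Fin M => ¬ N ≤ (n:ℕ)))
          = (Finset.univ : Finset (Fin N)).map ⟨Fin.castLE hN, Fin.castLE_injective hN⟩ := by
        ext n
        simp only [Finset.mem_filter, Finset.mem_univ, true_and, Finset.mem_map,
          Function.Embedding.coeFn_mk, not_le]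
        constructor
        · intro hn; exact ⟨⟨n, hn⟩, by simp [Fin.castLE]⟩
        · rintro ⟨i, rfl⟩; exact i.2
      rw [h10]; simp
    set n0 : Fin M := ⟨N, hNM'⟩ with hn0
    have hineq : ∑ k ∈ Q, lam k ≤ ∑ n, lam n * (1 - t n) := by
      have hQsplit := Finset.sum_filter_add_sum_filter_not Finset.univ
        (fun n : Fin M => N ≤ (n:ℕ)) (fun n => lam n * (1 - t n))
      rw [← hQ] at hQsplit
      have hsub : ∑ n ∈ Q, lam n * (1 - t n) = (∑ n ∈ Q, lam n) - ∑ n ∈ Q, lam n * t n := by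
        rw [← Finset.sum_sub_distrib]
        exact Finset.sum_congr rfl fun n _ => by ring
      have hQ1 : ∑ n ∈ Q, lam n * t n ≤ lam n0 * ∑ n ∈ Q, t n := by
        rw [Finset.mul_sum]
        refine Finset.sum_le_sum fun n hn => ?_
        have hn' : N ≤ (n:ℕ) := by rw [hQ] at hn; simpa using hn
        have hle : lam n ≤ lam n0 := hsort n0 n (by
          rw [Fin.le_def]; exact hn')
        exact mul_le_mul_of_nonneg_right hle (ht0 n)
      have hQc1 : lam n0 * ∑ n ∈ Finset.univ.filter (fun n : Fin M => ¬ N ≤ (n:ℕ)), (1 - t n)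
          ≤ ∑ n ∈ Finset.univ.filter (fun n : Fin M => ¬ N ≤ (n:ℕ)), lam n * (1 - t n) := by
        rw [Finset.mul_sum]
        refine Finset.sum_le_sum fun n hn => ?_
        have hn' : (n:ℕ) < N := by
          simp only [Finset.mem_filter, Finset.mem_univ, true_and, not_le] at hn; exact hn
        have hl : lam n0 ≤ lam n := hsort n n0 (by
          rw [Fin.le_def]; exact le_of_lt hn')
        exact mul_le_mul_of_nonneg_right hl (by linarith [ht1 n])
      have hsplit2 : ∑ n ∈ Finset.univ.filter (fun n : Fin M => ¬ N ≤ (n:ℕ)), ((1:ℝ) - t n)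
          = (N:ℝ) - ∑ n ∈ Finset.univ.filter (fun n : Fin M => ¬ N ≤ (n:ℕ)), t n := by
        rw [Finset.sum_sub_distrib, Finset.sum_const, nsmul_eq_mul, hcard, mul_one]
      have hsplitt : (∑ n ∈ Q, t n)
          + ∑ n ∈ Finset.univ.filter (fun n : Fin M => ¬ N ≤ (n:ℕ)), t n = (N:ℝ) := by
        have := Finset.sum_filter_add_sum_filter_not Finset.univ
          (fun n : Fin M => N ≤ (n:ℕ)) t
        rw [← hQ] at this
        rw [this]
        exact hsumt
      have e4 : lam n0 * ((N:ℝ) - ∑ n ∈ Finset.univ.filter (fun n : Fin M => ¬ N ≤ (n:ℕ)), t n)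
          = lam n0 * ∑ n ∈ Q, t n := by
        congr 1; linarith
      rw [hsplit2, e4] at hQc1
      linarith [hQsplit, hsub, hQ1, hQc1]
    have h9 : (1/(M:ℝ)) * ∑ n, ((M:ℝ)*lam n)*(1 - t n) = ∑ n, lam n * (1 - t n) := by
      rw [Finset.mul_sum]
      refine Finset.sum_congr rfl fun n _ => ?_
      field_simp
    rw [hsumnorm, h9]
    exact hineq
end
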